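/- Dybvig–Ingersoll–Ross theorem: In an arbitrage-free bond market where discounted bond prices B_t^{-1} P(t,T) are Q-martingales, if for fixed times s ≤ t the limits x_L(s) = lim_{T→∞} P(s,T)^{1/T} and x_L(t) = lim_{T→∞} P(t,T)^{1/T} exist almost surely and are finite, then x_L(s) ≥ x_L(t) almost surely. -/

import Mathlib

open MeasureTheory Filter Topology

/-- Dybvig-Ingersoll-Ross theorem: long forward rates can never fall. -/
theorem dybvig_ingersoll_ross
    {Ω : Type*} {F : MeasurableSpace Ω} (Q : Measure Ω) [IsProbabilityMeasure Q]
    (ℱ : ℕ → MeasurableSpace Ω) (hℱ_mono : Monotone ℱ) (hℱ_le : ∀ u, ℱ u ≤ F)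
    (B : ℕ → Ω → ℝ) (hBpos : ∀ u ω, 0 < B u ω)
    (hBadapted : ∀ u, Measurable[ℱ u] (B u))
    (hBint : ∀ u T, u ≤ T → Integrable (fun ω => B u ω / B T ω) Q)
    (P : ℕ → ℕ → Ω → ℝ)
    (hP : ∀ u T, u ≤ T → P u T =ᵐ[Q] Q[fun ω => B u ω / B T ω | ℱ u])
    (hPpos : ∀ u T, u ≤ T → ∀ᵐ ω ∂Q, 0 < P u T ω)
    (s t : ℕ) (hst : s ≤ t)
    (xLs xLt : Ω → ℝ)
    (hxLs : ∀ᵐ ω ∂Q, Tendsto (fun T : ℕ => P s T ω ^ ((T : ℝ)⁻¹)) atTop (𝓝 (xLs ω)))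
    (hxLt : ∀ᵐ ω ∂Q, Tendsto (fun T : ℕ => P t T ω ^ ((T : ℝ)⁻¹)) atTop (𝓝 (xLt ω))) :
    ∀ᵐ ω ∂Q, xLt ω ≤ xLs ω := by
  classical
  set PT : ℕ → ℕ → Ω → ℝ := fun u T => Q[fun ω => B u ω / B T ω | ℱ u] with hPTdef
  set S : ℚ → ℕ → Set Ω := fun a N => {ω | ∀ T, N ≤ T → PT s T ω ≤ (a : ℝ) ^ T} with hSdef
  set C : ℚ → ℕ → Set Ω := fun c M => {ω | ∀ T, M ≤ T → (c : ℝ) ^ T ≤ PT t T ω} with hCdef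
  set D : ℕ → Set Ω := fun m => {ω | 1 / (m + 1 : ℝ) ≤ B s ω / B t ω} with hDdef
  have hSmeas : ∀ (a : ℚ) (N : ℕ), MeasurableSet[ℱ s] (S a N) := by
    intro a N
    have hrw : S a N = ⋂ T, ⋂ (_ : N ≤ T), {ω | PT s T ω ≤ (a : ℝ) ^ T} := by
      ext ω; simp [hSdef, Set.mem_iInter]
    rw [hrw]
    exact MeasurableSet.iInter fun T => MeasurableSet.iInter fun _ =>
      measurableSet_le stronglyMeasurable_condExp.measurable measurable_const
  have hCmeas : ∀ (c : ℚ) (M : ℕ), MeasurableSet[ℱ t] (C c M) := by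
    intro c M
    have hrw : C c M = ⋂ T, ⋂ (_ : M ≤ T), {ω | (c : ℝ) ^ T ≤ PT t T ω} := by
      ext ω; simp [hCdef, Set.mem_iInter]
    rw [hrw]
    exact MeasurableSet.iInter fun T => MeasurableSet.iInter fun _ =>
      measurableSet_le measurable_const stronglyMeasurable_condExp.measurable
  have hBst : Measurable[ℱ t] fun ω => B s ω / B t ω :=
    ((hBadapted s).mono (hℱ_mono hst) le_rfl).div (hBadapted t)
  have hDmeas : ∀ m, MeasurableSet[ℱ t] (D m) := fun m =>
    measurableSet_le measurable_const hBst
  -- Key step: each of these "violation" sets is null.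
  have key : ∀ (a c : ℚ) (N M m : ℕ), 0 < a → a < c → Q (S a N ∩ C c M ∩ D m) = 0 := by
    intro a c N M m ha hac
    set G := S a N ∩ C c M ∩ D m with hGdef
    have hGt : MeasurableSet[ℱ t] G :=
      ((hℱ_mono hst _ (hSmeas a N)).inter (hCmeas c M)).inter (hDmeas m)
    have hGF : MeasurableSet G := hℱ_le t _ hGt
    have hSF : MeasurableSet (S a N) := hℱ_le s _ (hSmeas a N)
    have ha' : (0 : ℝ) < (a : ℝ) := by exact_mod_cast ha
    have hc' : (0 : ℝ) < (c : ℝ) := by exact_mod_cast ha.trans hac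
    have hac' : (a : ℝ) < (c : ℝ) := by exact_mod_cast hac
    have main : ∀ T, t ≤ T → N ≤ T → M ≤ T →
        1 / (m + 1 : ℝ) * (c : ℝ) ^ T * (Q G).toReal ≤ (a : ℝ) ^ T := by
      intro T htT hNT hMT
      have hsT : s ≤ T := hst.trans htT
      have hint_sT : Integrable (fun ω => B s ω / B T ω) Q := hBint s T hsT
      have hint_tT : Integrable (fun ω => B t ω / B T ω) Q := hBint t T htT
      set f : Ω → ℝ := G.indicator fun ω => B s ω / B t ω with hfdef
      have hf_sm : StronglyMeasurable[ℱ t] f :=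
        (hBst.indicator hGt).stronglyMeasurable
      have hfg_eq : (f * fun ω => B t ω / B T ω) = G.indicator fun ω => B s ω / B T ω := by
        funext ω
        by_cases hω : ω ∈ G
        · have h1 : B t ω ≠ 0 := (hBpos t ω).ne'
          have h2 : B T ω ≠ 0 := (hBpos T ω).ne'
          simp only [Pi.mul_apply, hfdef, Set.indicator_of_mem hω]
          field_simp
        · simp [hfdef, Set.indicator_of_notMem hω]
      have hfg_int : Integrable (f * fun ω => B t ω / B T ω) Q := by
        rw [hfg_eq]; exact hint_sT.indicator hGF
      have hpull := condExp_mul_of_stronglyMeasurable_left hf_sm hfg_int hint_tT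
      have h_ind : (f * Q[(fun ω => B t ω / B T ω) | ℱ t])
          = G.indicator fun ω => B s ω / B t ω * PT t T ω := by
        funext ω
        by_cases hω : ω ∈ G
        · simp [hfdef, Set.indicator_of_mem hω, hPTdef]
        · simp [hfdef, Set.indicator_of_notMem hω]
      have hfP_int : Integrable (f * Q[(fun ω => B t ω / B T ω) | ℱ t]) Q :=
        integrable_condExp.congr hpull
      have hfP_intOn : IntegrableOn (fun ω => B s ω / B t ω * PT t T ω) G Q := by
        rw [← integrable_indicator_iff hGF, ← h_ind]; exact hfP_int
      have hlow : 1 / (m + 1 : ℝ) * (c : ℝ) ^ T * (Q G).toReal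
          ≤ ∫ ω in G, B s ω / B t ω * PT t T ω ∂Q := by
        rw [mul_comm, ← smul_eq_mul, ← measureReal_def]
        refine setIntegral_ge_of_const_le hGF (measure_ne_top Q G) (fun ω hω => ?_) hfP_intOn
        have h1 : 1 / (m + 1 : ℝ) ≤ B s ω / B t ω := hω.2
        have h2 : (c : ℝ) ^ T ≤ PT t T ω := hω.1.2 T hMT
        exact mul_le_mul h1 h2 (by positivity) (le_trans (by positivity) h1)
      have e1 : ∫ ω in G, B s ω / B t ω * PT t T ω ∂Q = ∫ ω in G, B s ω / B T ω ∂Q := by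
        rw [← integral_indicator hGF, ← h_ind, ← integral_congr_ae hpull,
          integral_condExp (hℱ_le t), hfg_eq, integral_indicator hGF]
      have e2 : ∫ ω in G, B s ω / B T ω ∂Q ≤ ∫ ω in S a N, B s ω / B T ω ∂Q := by
        refine setIntegral_mono_set hint_sT.integrableOn ?_ ?_
        · filter_upwards with ω using div_nonneg (hBpos s ω).le (hBpos T ω).le
        · exact HasSubset.Subset.eventuallyLE fun ω hω => hω.1.1
      have e3 : ∫ ω in S a N, B s ω / B T ω ∂Q = ∫ ω in S a N, PT s T ω ∂Q :=
        (setIntegral_condExp (hℱ_le s) hint_sT (hSmeas a N)).symm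
      have e4 : ∫ ω in S a N, PT s T ω ∂Q ≤ (a : ℝ) ^ T := by
        calc ∫ ω in S a N, PT s T ω ∂Q ≤ ∫ _ω in S a N, (a : ℝ) ^ T ∂Q := by
              refine setIntegral_mono_on integrable_condExp.integrableOn
                integrableOn_const hSF ?_
              intro ω hω; exact hω T hNT
          _ = (Q (S a N)).toReal * (a : ℝ) ^ T := by rw [setIntegral_const, smul_eq_mul, measureReal_def]
          _ ≤ 1 * (a : ℝ) ^ T := by
              refine mul_le_mul_of_nonneg_right ?_ (by positivity)
              have h1 : Q (S a N) ≤ 1 := prob_le_one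
              calc (Q (S a N)).toReal ≤ (1 : ENNReal).toReal :=
                    ENNReal.toReal_mono ENNReal.one_ne_top h1
                _ = 1 := ENNReal.toReal_one
          _ = (a : ℝ) ^ T := one_mul _
      calc 1 / (m + 1 : ℝ) * (c : ℝ) ^ T * (Q G).toReal
          ≤ ∫ ω in G, B s ω / B t ω * PT t T ω ∂Q := hlow
        _ = ∫ ω in G, B s ω / B T ω ∂Q := e1
        _ ≤ ∫ ω in S a N, B s ω / B T ω ∂Q := e2
        _ = ∫ ω in S a N, PT s T ω ∂Q := e3
        _ ≤ (a : ℝ) ^ T := e4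
    -- Conclude `Q G = 0` from the decay of `(a/c)^T`.
    by_contra hQG
    have hpos : 0 < (Q G).toReal := ENNReal.toReal_pos hQG (measure_ne_top Q G)
    have hlim : Tendsto (fun T : ℕ => ((a : ℝ) / c) ^ T) atTop (𝓝 0) :=
      tendsto_pow_atTop_nhds_zero_of_lt_one (by positivity)
        (by rw [div_lt_one hc']; exact hac')
    have hev : ∀ᶠ T in atTop, 1 / (m + 1 : ℝ) * (Q G).toReal ≤ ((a : ℝ) / c) ^ T := by
      filter_upwards [eventually_ge_atTop t, eventually_ge_atTop N, eventually_ge_atTop M]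
        with T h1 h2 h3
      have hmain := main T h1 h2 h3
      rw [div_pow, le_div_iff₀ (by positivity)]
      calc 1 / (m + 1 : ℝ) * (Q G).toReal * (c : ℝ) ^ T
          = 1 / (m + 1 : ℝ) * (c : ℝ) ^ T * (Q G).toReal := by ring
        _ ≤ (a : ℝ) ^ T := hmain
    have hle0 : 1 / (m + 1 : ℝ) * (Q G).toReal ≤ 0 := ge_of_tendsto hlim hev
    have : 0 < 1 / (m + 1 : ℝ) * (Q G).toReal := by positivity
    linarith
  -- Combine the a.e. facts.
  have hPs_ae : ∀ᵐ ω ∂Q, ∀ T, s ≤ T → P s T ω = PT s T ω ∧ 0 < P s T ω := by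
    rw [ae_all_iff]
    intro T
    by_cases hT : s ≤ T
    · filter_upwards [hP s T hT, hPpos s T hT] with ω h1 h2 _ using ⟨h1, h2⟩
    · filter_upwards with ω h using absurd h hT
  have hPt_ae : ∀ᵐ ω ∂Q, ∀ T, t ≤ T → P t T ω = PT t T ω ∧ 0 < P t T ω := by
    rw [ae_all_iff]
    intro T
    by_cases hT : t ≤ T
    · filter_upwards [hP t T hT, hPpos t T hT] with ω h1 h2 _ using ⟨h1, h2⟩
    · filter_upwards with ω h using absurd h hT
  have hGnull : ∀ᵐ ω ∂Q, ∀ (a c : ℚ) (N M m : ℕ), 0 < a → a < c →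
      ω ∉ S a N ∩ C c M ∩ D m := by
    rw [ae_all_iff]; intro a
    rw [ae_all_iff]; intro c
    rw [ae_all_iff]; intro N
    rw [ae_all_iff]; intro M
    rw [ae_all_iff]; intro m
    by_cases h : 0 < a ∧ a < c
    · filter_upwards [measure_eq_zero_iff_ae_notMem.mp (key a c N M m h.1 h.2)]
        with ω hω _ _ using hω
    · filter_upwards with ω h1 h2 using absurd ⟨h1, h2⟩ h
  filter_upwards [hxLs, hxLt, hPs_ae, hPt_ae, hGnull] with ω hs1 ht1 hs2 ht2 hg
  by_contra hlt'
  push_neg at hlt'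
  have hxLs0 : 0 ≤ xLs ω := by
    refine ge_of_tendsto hs1 ?_
    filter_upwards [eventually_ge_atTop s] with T hT using
      Real.rpow_nonneg (hs2 T hT).2.le _
  obtain ⟨q1, hq1a, hq1b⟩ := exists_rat_btwn hlt'
  obtain ⟨q2, hq2a, hq2b⟩ := exists_rat_btwn hq1b
  have hq1pos : 0 < q1 := by exact_mod_cast hxLs0.trans_lt hq1a
  have hq12 : q1 < q2 := by exact_mod_cast hq2a
  obtain ⟨N, hN⟩ := eventually_atTop.mp
    ((hs1.eventually_lt_const hq1a).and ((eventually_ge_atTop s).and (eventually_ge_atTop 1)))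
  have hmemS : ω ∈ S q1 N := by
    intro T hT
    obtain ⟨hltq, hsT, h1T⟩ := hN T hT
    have hp := hs2 T hsT
    rw [← hp.1]
    have hT0 : ((T : ℝ)) ≠ 0 := by positivity
    have hpow : P s T ω = (P s T ω ^ ((T : ℝ)⁻¹)) ^ T := by
      rw [← Real.rpow_natCast (P s T ω ^ ((T : ℝ)⁻¹)) T, ← Real.rpow_mul hp.2.le,
        inv_mul_cancel₀ hT0, Real.rpow_one]
    rw [hpow]
    exact pow_le_pow_left₀ (Real.rpow_nonneg hp.2.le _) hltq.le T
  obtain ⟨M, hM⟩ := eventually_atTop.mp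
    ((ht1.eventually_const_lt hq2b).and ((eventually_ge_atTop t).and (eventually_ge_atTop 1)))
  have hmemC : ω ∈ C q2 M := by
    intro T hT
    obtain ⟨hltq, htT, h1T⟩ := hM T hT
    have hp := ht2 T htT
    rw [← hp.1]
    have hT0 : ((T : ℝ)) ≠ 0 := by positivity
    have hpow : P t T ω = (P t T ω ^ ((T : ℝ)⁻¹)) ^ T := by
      rw [← Real.rpow_natCast (P t T ω ^ ((T : ℝ)⁻¹)) T, ← Real.rpow_mul hp.2.le,
        inv_mul_cancel₀ hT0, Real.rpow_one]
    rw [hpow]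
    have hq1nn : (0 : ℝ) ≤ (q1 : ℝ) := by exact_mod_cast hq1pos.le
    have hq2nn : (0 : ℝ) ≤ (q2 : ℝ) := hq1nn.trans hq2a.le
    exact pow_le_pow_left₀ hq2nn hltq.le T
  obtain ⟨m, hm⟩ := exists_nat_one_div_lt (div_pos (hBpos s ω) (hBpos t ω))
  exact hg q1 q2 N M m hq1pos hq12 ⟨⟨hmemS, hmemC⟩, hm.le⟩
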